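/- Let P be a nonzero polynomial in n complex variables. Then every connected component of the complement ℝⁿ ∖ 𝒜_P of the amoeba of P is an open convex subset of ℝⁿ. -/

import Mathlib

/-- The zero locus in the complex torus `(ℂ∖{0})ⁿ` of a polynomial in `n` variables. -/
def curveN {n : ℕ} (P : MvPolynomial (Fin n) ℂ) : Set (Fin n → ℂ) :=
  {z | (∀ i, z i ≠ 0) ∧ MvPolynomial.eval z P = 0}

/-- The logarithmic projection `Log(z) = (log|z₁|, …, log|zₙ|)`. -/
noncomputable def LogN {n : ℕ} (z : Fin n → ℂ) : Fin n → ℝ :=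
  fun i => Real.log (‖z i‖)

/-- The amoeba of a polynomial in `n` variables. -/
noncomputable def amoebaN {n : ℕ} (P : MvPolynomial (Fin n) ℂ) : Set (Fin n → ℝ) :=
  LogN '' curveN P

namespace AmoebaConvexAux

open MvPolynomial Set Metric Complex Filter

variable {n : ℕ}

/-- The point on the torus over `a` with angles `θ`. -/
noncomputable def Ept (a θ : Fin n → ℝ) : Fin n → ℂ :=
  fun i => Complex.exp ((a i : ℂ) + (θ i : ℂ) * Complex.I)

theorem logN_Ept (a θ : Fin n → ℝ) : LogN (Ept a θ) = a := by
  funext i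
  simp [Ept, LogN, Complex.norm_exp, Real.log_exp]

theorem mem_amoeba_iff (P : MvPolynomial (Fin n) ℂ) (a : Fin n → ℝ) :
    a ∈ amoebaN P ↔ ∃ θ : Fin n → ℝ, MvPolynomial.eval (Ept a θ) P = 0 := by
  constructor
  · rintro ⟨z, ⟨hz0, hzP⟩, rfl⟩
    refine ⟨fun i => (z i).arg, ?_⟩
    have hz : Ept (LogN z) (fun i => (z i).arg) = z := by
      funext i
      have habs : (0 : ℝ) < ‖z i‖ := norm_pos_iff.mpr (hz0 i)
      have h1 : Complex.exp ((Real.log (‖z i‖) : ℂ)) = (‖z i‖ : ℂ) := by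
        rw [← Complex.ofReal_exp, Real.exp_log habs]
      simp only [Ept, LogN, Complex.exp_add, h1]
      exact Complex.norm_mul_exp_arg_mul_I (z i)
    rw [hz]; exact hzP
  · rintro ⟨θ, hθ⟩
    exact ⟨Ept a θ, ⟨fun i => Complex.exp_ne_zero _, hθ⟩, logN_Ept a θ⟩

/-- Reduction of angles modulo `2π`. -/
noncomputable def θred (θ : Fin n → ℝ) : Fin n → ℝ :=
  fun i => 2 * Real.pi * Int.fract (θ i / (2 * Real.pi))

theorem θred_mem (θ : Fin n → ℝ) :
    θred θ ∈ Set.pi Set.univ (fun _ : Fin n => Icc (0:ℝ) (2 * Real.pi)) := by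
  intro i _
  have h2π : (0:ℝ) < 2 * Real.pi := by positivity
  constructor
  · exact mul_nonneg h2π.le (Int.fract_nonneg _)
  · calc 2 * Real.pi * Int.fract (θ i / (2 * Real.pi))
        ≤ 2 * Real.pi * 1 := mul_le_mul_of_nonneg_left (Int.fract_lt_one _).le h2π.le
      _ = 2 * Real.pi := mul_one _

theorem ept_red (a θ : Fin n → ℝ) : Ept a θ = Ept a (θred θ) := by
  funext i
  have h2π : (2 * Real.pi : ℝ) ≠ 0 := by positivity
  have hfr : θred θ i = θ i - 2 * Real.pi * ⌊θ i / (2 * Real.pi)⌋ := by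
    simp only [θred, Int.fract, mul_sub]
    congr 1
    field_simp
  simp only [Ept, hfr]
  rw [show ((a i : ℂ) + ((θ i - 2 * Real.pi * ⌊θ i / (2 * Real.pi)⌋ : ℝ) : ℂ) * Complex.I)
      = ((a i : ℂ) + (θ i : ℂ) * Complex.I)
        - (⌊θ i / (2 * Real.pi)⌋ : ℤ) * (2 * (Real.pi : ℂ) * Complex.I) by push_cast; ring]
  rw [Complex.exp_sub, Complex.exp_int_mul_two_pi_mul_I]
  simp

theorem cont_Ept : Continuous (fun p : (Fin n → ℝ) × (Fin n → ℝ) => Ept p.1 p.2) := by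
  refine continuous_pi fun i => Complex.continuous_exp.comp ?_
  fun_prop

theorem diff_eval {Z : ℂ → Fin n → ℂ} (hZ : ∀ i, Differentiable ℂ (fun w => Z w i))
    (P : MvPolynomial (Fin n) ℂ) : Differentiable ℂ (fun w => MvPolynomial.eval (Z w) P) := by
  induction P using MvPolynomial.induction_on with
  | C a => simpa using differentiable_const a
  | add p q hp hq => simp only [map_add]; exact hp.add hq
  | mul_X p i hp => simp only [map_mul, MvPolynomial.eval_X]; exact hp.mul (hZ i)

/-- On the tori over a compact set of base points avoiding zeros of `P`, `|P|` has a positive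
lower bound. -/
theorem compact_min (P : MvPolynomial (Fin n) ℂ) {K : Set (Fin n → ℝ)} (hK : IsCompact K)
    (hne : K.Nonempty) (h : ∀ a ∈ K, ∀ θ : Fin n → ℝ, MvPolynomial.eval (Ept a θ) P ≠ 0) :
    ∃ δ > 0, ∀ a ∈ K, ∀ θ : Fin n → ℝ, δ ≤ ‖MvPolynomial.eval (Ept a θ) P‖ := by
  set Θ : Set (Fin n → ℝ) := Set.pi Set.univ (fun _ : Fin n => Icc (0:ℝ) (2 * Real.pi)) with hΘ
  have hΘc : IsCompact Θ := isCompact_univ_pi fun _ => isCompact_Icc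
  have hΘne : Θ.Nonempty := ⟨fun _ => 0, fun i _ => ⟨le_refl _, by positivity⟩⟩
  set S := K ×ˢ Θ with hS
  have hSc : IsCompact S := hK.prod hΘc
  have hSne : S.Nonempty := hne.prod hΘne
  have hFc : Continuous fun p : (Fin n → ℝ) × (Fin n → ℝ) =>
      ‖MvPolynomial.eval (Ept p.1 p.2) P‖ :=
    continuous_norm.comp ((MvPolynomial.continuous_eval P).comp cont_Ept)
  obtain ⟨p₀, hp₀, hmin⟩ := hSc.exists_isMinOn hSne hFc.continuousOn
  have hmin' := isMinOn_iff.mp hmin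
  refine ⟨‖MvPolynomial.eval (Ept p₀.1 p₀.2) P‖,
    norm_pos_iff.mpr (h p₀.1 hp₀.1 p₀.2), fun a ha θ => ?_⟩
  have h1 : ‖MvPolynomial.eval (Ept p₀.1 p₀.2) P‖
      ≤ ‖MvPolynomial.eval (Ept a (θred θ)) P‖ :=
    hmin' (a, θred θ) (Set.mk_mem_prod ha (θred_mem θ))
  rwa [← ept_red] at h1

/-- Phragmén–Lindelöf: if `P` does not vanish on the tube over the segment `[x,u]` and
`|P| ≥ C` on the tori over the endpoints, then `|P| ≥ C` on the whole tube. -/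
theorem strip_bound (P : MvPolynomial (Fin n) ℂ) (x u : Fin n → ℝ) {C : ℝ} (hC : 0 < C)
    (hseg : ∀ t ∈ Icc (0:ℝ) 1, ∀ θ : Fin n → ℝ,
      MvPolynomial.eval (Ept (x + t • (u - x)) θ) P ≠ 0)
    (hx : ∀ θ : Fin n → ℝ, C ≤ ‖MvPolynomial.eval (Ept x θ) P‖)
    (hu : ∀ θ : Fin n → ℝ, C ≤ ‖MvPolynomial.eval (Ept u θ) P‖) :
    ∀ t ∈ Icc (0:ℝ) 1, ∀ θ : Fin n → ℝ,
      C ≤ ‖MvPolynomial.eval (Ept (x + t • (u - x)) θ) P‖ := by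
  intro t ht θ
  set d : Fin n → ℝ := fun i => u i - x i with hd
  set Z : ℂ → Fin n → ℂ :=
    fun w i => Complex.exp ((x i : ℂ) + w * (d i : ℂ) + (θ i : ℂ) * Complex.I) with hZdef
  set g : ℂ → ℂ := fun w => MvPolynomial.eval (Z w) P with hgdef
  have hbase : ∀ s : ℝ, (fun i => x i + s * d i) = x + s • (u - x) := by
    intro s; funext i; simp [hd, mul_comm]
  have hg : Differentiable ℂ g := by
    refine diff_eval (fun i => ?_) P
    exact (((differentiable_id.mul_const ((d i : ℂ))).const_add ((x i : ℂ))).add_const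
      ((θ i : ℂ) * Complex.I)).cexp
  have hZ : ∀ w : ℂ, Z w = Ept (fun i => x i + w.re * d i) (fun i => θ i + w.im * d i) := by
    intro w; funext i
    simp only [hZdef, Ept]
    congr 1
    apply Complex.ext
    · simp [Complex.mul_re, Complex.mul_im]
    · simp [Complex.mul_re, Complex.mul_im]; ring
  have hzero : ∀ w : ℂ, w.re ∈ Icc (0:ℝ) 1 → g w ≠ 0 := by
    intro w hw
    rw [hgdef]
    simp only
    rw [hZ w, hbase w.re]
    exact hseg w.re hw _
  have hKc : IsCompact ((fun s : ℝ => x + s • (u - x)) '' Icc 0 1) :=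
    (isCompact_Icc).image (continuous_const.add (continuous_id.smul continuous_const))
  have hKne : ((fun s : ℝ => x + s • (u - x)) '' Icc 0 1).Nonempty :=
    ⟨_, ⟨0, ⟨le_refl _, zero_le_one⟩, rfl⟩⟩
  have hKavoid : ∀ a ∈ (fun s : ℝ => x + s • (u - x)) '' Icc 0 1,
      ∀ θ' : Fin n → ℝ, MvPolynomial.eval (Ept a θ') P ≠ 0 := by
    rintro a ⟨s, hs, rfl⟩ θ'
    exact hseg s hs θ'
  obtain ⟨δ, hδ, hδle⟩ := compact_min P hKc hKne hKavoid
  have hgδ : ∀ w : ℂ, w.re ∈ Icc (0:ℝ) 1 → δ ≤ ‖g w‖ := by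
    intro w hw
    rw [hgdef]; simp only; rw [hZ w, hbase w.re]
    exact hδle _ ⟨w.re, hw, rfl⟩ _
  set f : ℂ → ℂ := fun w => (g w)⁻¹ with hfdef
  have hfd : DiffContOnCl ℂ f (Complex.re ⁻¹' Ioo 0 1) := by
    constructor
    · intro w hw
      exact ((hg w).inv (hzero w ⟨hw.1.le, hw.2.le⟩)).differentiableWithinAt
    · have hsub : closure (Complex.re ⁻¹' Ioo (0:ℝ) 1) ⊆ Complex.re ⁻¹' Icc 0 1 :=
        closure_minimal (preimage_mono Ioo_subset_Icc_self)
          (isClosed_Icc.preimage Complex.continuous_re)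
      intro w hw
      exact ((hg.continuous.continuousAt).inv₀ (hzero w (hsub hw))).continuousWithinAt
  have hB : ∃ c < Real.pi / (1 - 0), ∃ B,
      f =O[Filter.comap (_root_.abs ∘ Complex.im) Filter.atTop ⊓
        Filter.principal (Complex.re ⁻¹' Ioo 0 1)]
        fun z => Real.exp (B * Real.exp (c * |z.im|)) := by
    refine ⟨0, by simpa using Real.pi_pos, 0, ?_⟩
    refine Asymptotics.IsBigO.of_bound δ⁻¹ ?_
    refine Filter.eventually_inf_principal.mpr (Filter.Eventually.of_forall fun w hw => ?_)
    have h1 : δ ≤ ‖g w‖ := hgδ w ⟨hw.1.le, hw.2.le⟩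
    have h2 : ‖f w‖ ≤ δ⁻¹ := by
      rw [hfdef]
      simp only [norm_inv]
      exact inv_anti₀ hδ h1
    simpa using h2
  have hle0 : ∀ z : ℂ, z.re = 0 → ‖f z‖ ≤ C⁻¹ := by
    intro z hz
    have h1 : C ≤ ‖g z‖ := by
      rw [hgdef]; simp only; rw [hZ z, hz]
      have hbx : (fun i => x i + (0:ℝ) * d i) = x := by funext i; simp
      rw [hbx]
      exact hx _
    simp only [hfdef, norm_inv]
    exact inv_anti₀ hC h1
  have hle1 : ∀ z : ℂ, z.re = 1 → ‖f z‖ ≤ C⁻¹ := by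
    intro z hz
    have h1 : C ≤ ‖g z‖ := by
      rw [hgdef]; simp only; rw [hZ z, hz]
      have hbu : (fun i => x i + (1:ℝ) * d i) = u := by funext i; simp [hd]
      rw [hbu]
      exact hu _
    simp only [hfdef, norm_inv]
    exact inv_anti₀ hC h1
  have hPL := PhragmenLindelof.vertical_strip (a := 0) (b := 1) (z := (t:ℂ))
    hfd hB hle0 hle1 (by simpa using ht.1) (by simpa using ht.2)
  have hgt0 : g (t:ℂ) ≠ 0 := hzero _ (by simpa using ht)
  have habs : 0 < ‖g (t:ℂ)‖ := norm_pos_iff.mpr hgt0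
  have hinv : (‖g (t:ℂ)‖)⁻¹ ≤ C⁻¹ := by
    simpa [hfdef] using hPL
  have hfinal : C ≤ ‖g (t:ℂ)‖ := by
    by_contra hcon
    push_neg at hcon
    have := inv_strictAnti₀ habs hcon
    linarith
  rw [hgdef] at hfinal; simp only at hfinal
  rw [hZ ((t:ℂ))] at hfinal
  simpa [hbase t] using hfinal

/-- The amoeba is a closed subset of `ℝⁿ`. -/
theorem isClosed_amoeba (P : MvPolynomial (Fin n) ℂ) : IsClosed (amoebaN P) := by
  refine IsSeqClosed.isClosed ?_
  intro a L ha hL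
  have hθ : ∀ k, ∃ θ ∈ Set.pi Set.univ (fun _ : Fin n => Icc (0:ℝ) (2 * Real.pi)),
      MvPolynomial.eval (Ept (a k) θ) P = 0 := by
    intro k
    obtain ⟨θ, hθk⟩ := (mem_amoeba_iff P (a k)).mp (ha k)
    exact ⟨θred θ, θred_mem θ, by rw [← ept_red]; exact hθk⟩
  choose θs hθmem hθzero using hθ
  obtain ⟨θlim, _, φ, hφ, hφt⟩ :=
    (isCompact_univ_pi fun _ : Fin n => isCompact_Icc).tendsto_subseq hθmem
  rw [mem_amoeba_iff]
  refine ⟨θlim, ?_⟩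
  have h1 : Filter.Tendsto (fun k => (a (φ k), θs (φ k))) Filter.atTop (nhds (L, θlim)) :=
    (hL.comp hφ.tendsto_atTop).prodMk_nhds hφt
  have hcont : Continuous (fun p : (Fin n → ℝ) × (Fin n → ℝ) =>
      MvPolynomial.eval (Ept p.1 p.2) P) := (MvPolynomial.continuous_eval P).comp cont_Ept
  have h2 : Filter.Tendsto (fun k => MvPolynomial.eval (Ept (a (φ k)) (θs (φ k))) P)
      Filter.atTop (nhds (MvPolynomial.eval (Ept L θlim) P)) := by
    have h2' := (hcont.tendsto (L, θlim)).comp h1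
    simpa [Function.comp_def] using h2'
  have h3 : Filter.Tendsto (fun k => MvPolynomial.eval (Ept (a (φ k)) (θs (φ k))) P)
      Filter.atTop (nhds 0) := by
    simpa [fun k => hθzero (φ k)] using (tendsto_const_nhds :
      Filter.Tendsto (fun _ : ℕ => (0:ℂ)) Filter.atTop (nhds 0))
  exact tendsto_nhds_unique h2 h3

end AmoebaConvexAux

open MvPolynomial Set Metric Complex Filter AmoebaConvexAux in
/-- Every connected component of the complement of the amoeba of a nonzero polynomial in
`n` complex variables is open and convex. -/
theorem component_of_amoeba_complement_isOpen_convex {n : ℕ}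
    (P : MvPolynomial (Fin n) ℂ) (hP : P ≠ 0) (E : Set (Fin n → ℝ))
    (hE : ∃ x ∈ (amoebaN P)ᶜ, E = connectedComponentIn (amoebaN P)ᶜ x) :
    IsOpen E ∧ Convex ℝ E := by
  obtain ⟨x₀, hx₀, rfl⟩ := hE
  have hAopen : IsOpen (amoebaN P)ᶜ := (isClosed_amoeba P).isOpen_compl
  have hEopen : IsOpen (connectedComponentIn (amoebaN P)ᶜ x₀) := hAopen.connectedComponentIn
  refine ⟨hEopen, ?_⟩
  -- main claim: segments between points of the component avoid the amoeba
  have hseg : ∀ x ∈ connectedComponentIn (amoebaN P)ᶜ x₀,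
      ∀ y ∈ connectedComponentIn (amoebaN P)ᶜ x₀, segment ℝ x y ⊆ (amoebaN P)ᶜ := by
    intro x hx y hy
    have hxA : x ∈ (amoebaN P)ᶜ := connectedComponentIn_subset _ _ hx
    have hconn : IsConnected (connectedComponentIn (amoebaN P)ᶜ x₀) :=
      isConnected_connectedComponentIn_iff.mpr hx₀
    have hpc : IsPathConnected (connectedComponentIn (amoebaN P)ᶜ x₀) :=
      (hEopen.isConnected_iff_isPathConnected).mp hconn
    obtain ⟨γ, hγ⟩ := hpc.joinedIn x hx y hy
    set γ' : ℝ → (Fin n → ℝ) := fun s => γ (Set.projIcc 0 1 zero_le_one s) with hγ'def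
    have hγ'c : Continuous γ' := γ.continuous.comp continuous_projIcc
    have hγ'A : ∀ s, γ' s ∈ (amoebaN P)ᶜ :=
      fun s => connectedComponentIn_subset _ _ (hγ _)
    set O : Set ℝ := {s | ∀ t ∈ Icc (0:ℝ) 1, ∀ θ : Fin n → ℝ,
      MvPolynomial.eval (Ept (x + t • (γ' s - x)) θ) P ≠ 0} with hO
    have hOopen : IsOpen O := by
      rw [← isClosed_compl_iff]
      refine IsSeqClosed.isClosed ?_
      intro sseq s hsk hslim
      have hpt : ∀ k, ∃ t ∈ Icc (0:ℝ) 1, x + t • (γ' (sseq k) - x) ∈ amoebaN P := by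
        intro k
        have hk := hsk k
        simp only [hO, mem_compl_iff, mem_setOf_eq] at hk
        push_neg at hk
        obtain ⟨t, ht, θ, hθ⟩ := hk
        exact ⟨t, ht, (mem_amoeba_iff P _).mpr ⟨θ, hθ⟩⟩
      choose ts hts hmem using hpt
      obtain ⟨tlim, htlim, φ, hφ, hφt⟩ := isCompact_Icc.tendsto_subseq hts
      have hγlim : Filter.Tendsto (fun k => γ' (sseq (φ k))) Filter.atTop (nhds (γ' s)) := by
        have := (hγ'c.tendsto s).comp (hslim.comp hφ.tendsto_atTop)
        simpa [Function.comp_def] using this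
      have hlim : Filter.Tendsto (fun k => x + ts (φ k) • (γ' (sseq (φ k)) - x))
          Filter.atTop (nhds (x + tlim • (γ' s - x))) :=
        tendsto_const_nhds.add (hφt.smul (hγlim.sub tendsto_const_nhds))
      have hmem' : x + tlim • (γ' s - x) ∈ amoebaN P :=
        (isClosed_amoeba P).mem_of_tendsto hlim
          (Filter.Eventually.of_forall fun k => hmem (φ k))
      simp only [hO, mem_compl_iff, mem_setOf_eq]
      push_neg
      obtain ⟨θ, hθ⟩ := (mem_amoeba_iff P _).mp hmem'
      exact ⟨tlim, htlim, θ, hθ⟩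
    have hOclosed : IsClosed O := by
      refine IsSeqClosed.isClosed ?_
      intro sseq s hsk hslim
      -- lower bound at `x`
      have hxav : ∀ a ∈ ({x} : Set (Fin n → ℝ)), ∀ θ : Fin n → ℝ,
          MvPolynomial.eval (Ept a θ) P ≠ 0 := by
        rintro a rfl θ h0
        exact hxA ((mem_amoeba_iff P a).mpr ⟨θ, h0⟩)
      obtain ⟨δ₁, hδ₁, hδ₁le⟩ := compact_min P isCompact_singleton ⟨x, rfl⟩ hxav
      -- lower bound near `γ' s`
      obtain ⟨ε, hε, hb⟩ := Metric.isOpen_iff.mp hAopen (γ' s) (hγ'A s)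
      have hball : Metric.closedBall (γ' s) (ε/2) ⊆ (amoebaN P)ᶜ :=
        (Metric.closedBall_subset_ball (by linarith)).trans hb
      have hbav : ∀ a ∈ Metric.closedBall (γ' s) (ε/2), ∀ θ : Fin n → ℝ,
          MvPolynomial.eval (Ept a θ) P ≠ 0 := by
        intro a ha θ h0
        exact (hball ha) ((mem_amoeba_iff P a).mpr ⟨θ, h0⟩)
      obtain ⟨δ₂, hδ₂, hδ₂le⟩ := compact_min P (isCompact_closedBall _ _)
        ⟨γ' s, Metric.mem_closedBall_self (by positivity)⟩ hbav
      have hCpos : 0 < min δ₁ δ₂ := lt_min hδ₁ hδ₂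
      have hγlim : Filter.Tendsto (fun k => γ' (sseq k)) Filter.atTop (nhds (γ' s)) := by
        have := (hγ'c.tendsto s).comp hslim
        simpa [Function.comp_def] using this
      have hev : ∀ᶠ k in Filter.atTop, γ' (sseq k) ∈ Metric.closedBall (γ' s) (ε/2) :=
        hγlim.eventually_mem (Metric.closedBall_mem_nhds _ (by positivity))
      have hbd : ∀ k, γ' (sseq k) ∈ Metric.closedBall (γ' s) (ε/2) →
          ∀ t ∈ Icc (0:ℝ) 1, ∀ θ : Fin n → ℝ,
            min δ₁ δ₂ ≤ ‖MvPolynomial.eval (Ept (x + t • (γ' (sseq k) - x)) θ) P‖ := by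
        intro k hk
        exact strip_bound P x (γ' (sseq k)) hCpos (hsk k)
          (fun θ => le_trans (min_le_left _ _) (hδ₁le x rfl θ))
          (fun θ => le_trans (min_le_right _ _) (hδ₂le _ hk θ))
      simp only [hO, mem_setOf_eq]
      intro t ht θ
      have hlim2 : Filter.Tendsto
          (fun k => ‖MvPolynomial.eval (Ept (x + t • (γ' (sseq k) - x)) θ) P‖)
          Filter.atTop
          (nhds (‖MvPolynomial.eval (Ept (x + t • (γ' s - x)) θ) P‖)) := by
        have hc0 : Continuous fun u : Fin n → ℝ => ((x + t • (u - x), θ) :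
            (Fin n → ℝ) × (Fin n → ℝ)) :=
          (continuous_const.add
            ((continuous_id.sub continuous_const).const_smul t)).prodMk continuous_const
        have hc1 : Continuous (fun p : (Fin n → ℝ) × (Fin n → ℝ) =>
            MvPolynomial.eval (Ept p.1 p.2) P) :=
          (MvPolynomial.continuous_eval P).comp cont_Ept
        have hc2 := continuous_norm.comp (hc1.comp hc0)
        have hc : Continuous fun u : Fin n → ℝ =>
            ‖MvPolynomial.eval (Ept (x + t • (u - x)) θ) P‖ := by
          simpa [Function.comp_def] using hc2
        have := (hc.tendsto (γ' s)).comp hγlim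
        simpa [Function.comp_def] using this
      have hCle : min δ₁ δ₂ ≤
          ‖MvPolynomial.eval (Ept (x + t • (γ' s - x)) θ) P‖ :=
        ge_of_tendsto hlim2 (hev.mono fun k hk => hbd k hk t ht θ)
      intro h0
      rw [h0] at hCle
      simp only [norm_zero] at hCle
      linarith
    have hOne : (0:ℝ) ∈ O := by
      have hγ0 : γ' 0 = x := by
        rw [hγ'def]
        simp only [Set.projIcc_left]
        have : (⟨0, Set.left_mem_Icc.mpr zero_le_one⟩ : Set.Icc (0:ℝ) 1) = 0 := rfl
        rw [this, γ.source]
      simp only [hO, mem_setOf_eq, hγ0]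
      intro t ht θ h0
      have : x + t • (x - x) = x := by simp
      rw [this] at h0
      exact hxA ((mem_amoeba_iff P x).mpr ⟨θ, h0⟩)
    have hOuniv : O = Set.univ := IsClopen.eq_univ ⟨hOclosed, hOopen⟩ ⟨0, hOne⟩
    have h1O : (1:ℝ) ∈ O := hOuniv ▸ Set.mem_univ 1
    have hγ1 : γ' 1 = y := by
      rw [hγ'def]
      simp only [Set.projIcc_right]
      have : (⟨1, Set.right_mem_Icc.mpr zero_le_one⟩ : Set.Icc (0:ℝ) 1) = 1 := rfl
      rw [this, γ.target]
    intro p hp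
    rw [segment_eq_image' ℝ x y] at hp
    obtain ⟨t, ht, rfl⟩ := hp
    intro hpA
    obtain ⟨θ, hθ⟩ := (mem_amoeba_iff P _).mp hpA
    have := h1O t ht θ
    rw [hγ1] at this
    exact this hθ
  -- conclude convexity
  intro x hx y hy s t hs ht hst
  have hsub : segment ℝ x y ⊆ connectedComponentIn (amoebaN P)ᶜ x₀ := by
    have h1 : segment ℝ x y ⊆ connectedComponentIn (amoebaN P)ᶜ x :=
      (convex_segment x y).isPreconnected.subset_connectedComponentIn
        (left_mem_segment ℝ x y) (hseg x hx y hy)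
    rw [connectedComponentIn_eq hx]; exact h1
  exact hsub ⟨s, t, hs, ht, hst, rfl⟩
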